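/- Let k ≥ 1. For all (z,t), (z',t') ∈ ℂ^k × ℝ, the Korányi gauge is subadditive with respect to the Heisenberg group law: ρ((z,t)·(z',t')) ≤ ρ(z,t) + ρ(z',t'). -/

import Mathlib

open MeasureTheory
open scoped ENNReal

noncomputable section

/-- The underlying space of the Heisenberg group ℍ_k : ℂ^k × ℝ. -/
abbrev Hk (k : ℕ) := (Fin k → ℂ) × ℝ

/-- The Korányi gauge ρ(z,t) = (|z|⁴ + t²)^{1/4}, where |z|² = Σⱼ |zⱼ|². -/
def rhoK (k : ℕ) (v : Hk k) : ℝ :=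
  ((∑ j, ‖v.1 j‖ ^ 2) ^ 2 + v.2 ^ 2) ^ ((1 : ℝ) / 4)

/-- The Heisenberg dilations δ_r(z,t) = (r z, r² t). -/
def dilK (k : ℕ) (r : ℝ) (v : Hk k) : Hk k := (r • v.1, r ^ 2 * v.2)

/-- The Korányi unit sphere S_ρ = {v : ρ(v) = 1}. -/
def SK (k : ℕ) : Set (Hk k) := {v | rhoK k v = 1}

/-- The Heisenberg group law (z,t)·(z',t') = (z+z', t+t'+2 Im⟨z,z'⟩). -/
def hmul (k : ℕ) (p q : Hk k) : Hk k :=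
  (p.1 + q.1, p.2 + q.2 + 2 * (∑ j, p.1 j * (starRingEnd ℂ) (q.1 j)).im)

/-- The Heisenberg group inverse (z,t)⁻¹ = (−z,−t). -/
def hinv (k : ℕ) (p : Hk k) : Hk k := (-p.1, -p.2)

/-- The left-invariant Korányi distance d(p,q) = ρ(p⁻¹·q). -/
def dK (k : ℕ) (p q : Hk k) : ℝ := rhoK k (hmul k (hinv k p) q)

lemma rhoK_nonneg (k : ℕ) (v : Hk k) : 0 ≤ rhoK k v := by
  unfold rhoK; positivity

lemma rhoK_sq (k : ℕ) (v : Hk k) :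
    rhoK k v ^ 2 = Real.sqrt ((∑ j, ‖v.1 j‖ ^ 2) ^ 2 + v.2 ^ 2) := by
  set x := (∑ j, ‖v.1 j‖ ^ 2) ^ 2 + v.2 ^ 2 with hx
  have hx0 : (0:ℝ) ≤ x := by positivity
  rw [rhoK, ← hx, ← Real.rpow_natCast (x ^ ((1:ℝ)/4)) 2, ← Real.rpow_mul hx0,
    Real.sqrt_eq_rpow]
  norm_num

set_option maxHeartbeats 1000000 in
lemma sqrt_sum_le_rhoK (k : ℕ) (v : Hk k) :
    Real.sqrt (∑ j, ‖v.1 j‖ ^ 2) ≤ rhoK k v := by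
  set a := ∑ j, ‖v.1 j‖ ^ 2 with ha
  have ha0 : (0:ℝ) ≤ a := by positivity
  have h1 : Real.sqrt a = (a ^ 2) ^ ((1:ℝ)/4) := by
    rw [← Real.rpow_natCast a 2, ← Real.rpow_mul ha0, Real.sqrt_eq_rpow]
    norm_num
  rw [rhoK, ← ha, h1]
  apply Real.rpow_le_rpow (by positivity) (by nlinarith [sq_nonneg v.2]) (by norm_num)

set_option maxHeartbeats 4000000 in
/-- the Korányi gauge is subadditive with respect to the Heisenberg
group law: `ρ((z,t)·(z',t')) ≤ ρ(z,t) + ρ(z',t')`. -/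
theorem stmt12 (k : ℕ) (hk : 1 ≤ k) (p q : Hk k) :
    rhoK k (hmul k p q) ≤ rhoK k p + rhoK k q := by
  obtain ⟨z, t⟩ := p
  obtain ⟨w, s⟩ := q
  set a := ∑ j, ‖z j‖ ^ 2 with ha
  set b := ∑ j, ‖w j‖ ^ 2 with hb
  have ha0 : (0:ℝ) ≤ a := by positivity
  have hb0 : (0:ℝ) ≤ b := by positivity
  set S : ℂ := ∑ j, z j * (starRingEnd ℂ) (w j) with hS
  -- sum expansion: Σ |z+w|² = a + b + 2 Re S
  have hterm : ∀ j, ‖z j + w j‖ ^ 2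
      = ‖z j‖ ^ 2 + ‖w j‖ ^ 2
        + 2 * (z j * (starRingEnd ℂ) (w j)).re := by
    intro j
    rw [Complex.sq_norm, Complex.sq_norm, Complex.sq_norm, Complex.normSq_add]
  have hsum : ∑ j, ‖z j + w j‖ ^ 2 = a + b + 2 * S.re := by
    simp only [hterm]
    rw [Finset.sum_add_distrib, Finset.sum_add_distrib, ha, hb, hS, Complex.re_sum,
      Finset.mul_sum]
  -- ρ(pq)² = |A + B + 2S|  where A = a + t i, B = b + s i
  have hC : rhoK k (hmul k (z, t) (w, s)) ^ 2
      = ‖((a + b + 2 * S.re : ℝ) : ℂ) + ((t + s + 2 * S.im : ℝ)) * Complex.I‖ := by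
    rw [Complex.norm_add_mul_I, rhoK_sq]
    have h1 : ∑ j, ‖(hmul k (z, t) (w, s)).1 j‖ ^ 2 = a + b + 2 * S.re := by
      rw [← hsum]
      simp [hmul]
    have h2 : (hmul k (z, t) (w, s)).2 = t + s + 2 * S.im := by
      simp [hmul, hS, Complex.im_sum]
    rw [h1, h2]
  have hA : ‖(a : ℂ) + (t : ℂ) * Complex.I‖ = rhoK k (z, t) ^ 2 := by
    rw [Complex.norm_add_mul_I, rhoK_sq]
  have hB : ‖(b : ℂ) + (s : ℂ) * Complex.I‖ = rhoK k (w, s) ^ 2 := by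
    rw [Complex.norm_add_mul_I, rhoK_sq]
  -- Cauchy–Schwarz: |S| ≤ √a √b
  have hCS : ‖S‖ ≤ Real.sqrt a * Real.sqrt b := by
    have h := norm_inner_le_norm (𝕜 := ℂ)
      ((WithLp.equiv 2 (Fin k → ℂ)).symm w) ((WithLp.equiv 2 (Fin k → ℂ)).symm z)
    have hinner : (inner ℂ ((WithLp.equiv 2 (Fin k → ℂ)).symm w)
        ((WithLp.equiv 2 (Fin k → ℂ)).symm z) : ℂ) = S := by
      rw [hS]
      simp [PiLp.inner_apply, mul_comm]
    rw [hinner] at h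
    have hnz : ‖(WithLp.equiv 2 (Fin k → ℂ)).symm z‖ = Real.sqrt a := by
      rw [EuclideanSpace.norm_eq, ha]
      simp
    have hnw : ‖(WithLp.equiv 2 (Fin k → ℂ)).symm w‖ = Real.sqrt b := by
      rw [EuclideanSpace.norm_eq, hb]
      simp
    rw [hnz, hnw] at h
    calc ‖S‖ = ‖S‖ := rfl
      _ ≤ _ := by rw [mul_comm]; exact h
  have hsa : Real.sqrt a ≤ rhoK k (z, t) := sqrt_sum_le_rhoK k (z, t)
  have hsb : Real.sqrt b ≤ rhoK k (w, s) := sqrt_sum_le_rhoK k (w, s)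
  have hrp := rhoK_nonneg k (z, t)
  have hrq := rhoK_nonneg k (w, s)
  have hdecomp : ((a + b + 2 * S.re : ℝ) : ℂ) + ((t + s + 2 * S.im : ℝ)) * Complex.I
      = ((a : ℂ) + (t : ℂ) * Complex.I) + ((b : ℂ) + (s : ℂ) * Complex.I) + 2 * S := by
    apply Complex.ext <;> push_cast <;> simp <;> ring
  have key : rhoK k (hmul k (z, t) (w, s)) ^ 2 ≤
      (rhoK k (z, t) + rhoK k (w, s)) ^ 2 := by
    rw [hC, hdecomp]
    calc ‖((a : ℂ) + (t : ℂ) * Complex.I) + ((b : ℂ) + (s : ℂ) * Complex.I) + 2 * S‖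
        ≤ ‖(a : ℂ) + (t : ℂ) * Complex.I‖
          + ‖(b : ℂ) + (s : ℂ) * Complex.I‖ + ‖2 * S‖ :=
          (norm_add_le _ _).trans (add_le_add_left (norm_add_le _ _) _)
      _ = ‖(a : ℂ) + (t : ℂ) * Complex.I‖
          + ‖(b : ℂ) + (s : ℂ) * Complex.I‖ + 2 * ‖S‖ := by
          rw [norm_mul]; norm_num
      _ ≤ rhoK k (z, t) ^ 2 + rhoK k (w, s) ^ 2
            + 2 * (rhoK k (z, t) * rhoK k (w, s)) := by
          rw [hA, hB]
          have : ‖S‖ ≤ rhoK k (z, t) * rhoK k (w, s) :=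
            hCS.trans (mul_le_mul hsa hsb (Real.sqrt_nonneg b) hrp)
          linarith
      _ = (rhoK k (z, t) + rhoK k (w, s)) ^ 2 := by ring
  nlinarith [rhoK_nonneg k (hmul k (z, t) (w, s))]

end
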